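/- Two bit strings of length n whose Gray-to-binary conversions, read as natural numbers in base 2, differ by exactly 1 (i.e. are consecutive in rank) differ in exactly one bit position. -/

import Mathlib

/-- Gray-to-binary conversion on bit strings of length `n`:
`u i` is the XOR (parity) of `g 0, …, g i`. -/
def grayToBin (n : ℕ) (g : Fin n → Bool) : Fin n → Bool :=
  fun i => decide (Odd ((Finset.Iic i).filter (fun j => g j = true)).card)

/-- The rank of a bit string `g` of length `n`: the natural number whose base-2
digits (most significant first) are the bits of the Gray-to-binary conversion of `g`. -/
def rank (n : ℕ) (g : Fin n → Bool) : ℕ :=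
  ∑ i : Fin n, if grayToBin n g i then 2 ^ (n - 1 - (i : ℕ)) else 0

/-- Two bit strings of length `n` whose ranks are consecutive differ in exactly
one bit position. -/

private def bval (n : ℕ) (v : ℕ → Bool) : ℕ :=
  ∑ j ∈ Finset.range n, if v j then 2 ^ j else 0

private lemma bval_succ (n : ℕ) (v : ℕ → Bool) :
    bval (n + 1) v = (if v 0 then 1 else 0) + 2 * bval n (fun j => v (j + 1)) := by
  unfold bval
  rw [Finset.sum_range_succ', Finset.mul_sum]
  simp only [pow_zero]
  rw [add_comm]
  congr 1
  apply Finset.sum_congr rfl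
  intro j _
  split <;> ring

private lemma bval_inj : ∀ n (v w : ℕ → Bool), bval n v = bval n w →
    ∀ j < n, v j = w j := by
  intro n
  induction n with
  | zero => intro v w _ j hj; omega
  | succ m ih =>
    intro v w hvw j hj
    rw [bval_succ, bval_succ] at hvw
    have h0 : v 0 = w 0 := by
      rcases hv : v 0 <;> rcases hw : w 0 <;> simp [hv, hw] at hvw ⊢ <;> omega
    have ht : bval m (fun j => v (j + 1)) = bval m (fun j => w (j + 1)) := by
      rcases hv : v 0 <;> rw [hv] at h0 <;> simp [hv, ← h0] at hvw <;> omega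
    cases j with
    | zero => exact h0
    | succ i => exact ih _ _ ht i (by omega)

private lemma bval_succ_struct : ∀ n (v v' : ℕ → Bool),
    bval n v' = bval n v + 1 → ∃ k < n, ∀ j < n, ((v j ≠ v' j) ↔ j ≤ k) := by
  intro n
  induction n with
  | zero => intro v v' hv; simp [bval] at hv
  | succ m ih =>
    intro v v' hv
    rw [bval_succ, bval_succ] at hv
    rcases h0 : v 0 <;> rcases h0' : v' 0 <;> rw [h0, h0'] at hv <;> simp at hv
    · -- v 0 = false, v' 0 = false : parity contradiction
      omega
    · -- v 0 = false, v' 0 = true : tails equal, k = 0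
      have heq : bval m (fun j => v (j + 1)) = bval m (fun j => v' (j + 1)) := by omega
      refine ⟨0, by omega, ?_⟩
      intro j hj
      cases j with
      | zero => simp [h0, h0']
      | succ i =>
        have := bval_inj m _ _ heq i (by omega)
        simp only [this]
        simp
    · -- v 0 = true, v' 0 = false : recurse, k = k' + 1
      have : bval m (fun j => v' (j + 1)) = bval m (fun j => v (j + 1)) + 1 := by omega
      obtain ⟨k, hk, hkk⟩ := ih _ _ this
      refine ⟨k + 1, by omega, ?_⟩
      intro j hj
      cases j with
      | zero => simp [h0, h0']
      | succ i =>
        have := hkk i (by omega)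
        simpa [Nat.succ_le_succ_iff] using this
    · -- both true: parity contradiction
      omega

private lemma gray_zero (n : ℕ) (g : Fin n → Bool) (i : Fin n) (hi : (i : ℕ) = 0) :
    grayToBin n g i = g i := by
  have hIic : Finset.Iic i = {i} := by
    ext j
    simp only [Finset.mem_Iic, Finset.mem_singleton, Fin.le_def, Fin.ext_iff, hi]
    omega
  rcases hg : g i <;>
    simp [grayToBin, hIic, Finset.filter_singleton, hg, Nat.odd_iff]

private lemma gray_step (n : ℕ) (g : Fin n → Bool) (i : Fin n) (hi : 0 < (i : ℕ)) :
    grayToBin n g i = xor (g i) (grayToBin n g ⟨(i : ℕ) - 1, by omega⟩) := by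
  set i' : Fin n := ⟨(i : ℕ) - 1, by omega⟩ with hi'
  have hIic : Finset.Iic i = insert i (Finset.Iic i') := by
    ext j
    simp only [Finset.mem_Iic, Finset.mem_insert, Fin.le_def, Fin.ext_iff, hi']
    omega
  have hnot : i ∉ (Finset.Iic i').filter (fun j => g j = true) := by
    simp only [Finset.mem_filter, Finset.mem_Iic, Fin.le_def, hi']
    intro hmem
    omega
  rw [grayToBin, grayToBin, hIic, Finset.filter_insert]
  rcases hg : g i
  · simp
  · rw [if_pos rfl, Finset.card_insert_of_notMem hnot]
    simp [Nat.odd_add_one, ← Nat.not_odd_iff_even, decide_not]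

theorem consecutive_rank_differ_in_one_bit (n : ℕ) (g g' : Fin n → Bool)
    (h : rank n g' = rank n g + 1) :
    (Finset.univ.filter (fun i : Fin n => g i ≠ g' i)).card = 1 := by
  have hrank : ∀ f : Fin n → Bool,
      rank n f = bval n (fun j => if hj : j < n then grayToBin n f ⟨n - 1 - j, by omega⟩
        else false) := by
    intro f
    rw [rank, bval, ← Fin.sum_univ_eq_sum_range,
      ← Equiv.sum_comp (Fin.revPerm)
        (fun i : Fin n => if grayToBin n f i then 2 ^ (n - 1 - (i : ℕ)) else 0)]
    apply Finset.sum_congr rfl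
    intro i _
    have hin := i.isLt
    have h1 : (Fin.revPerm i : Fin n) = ⟨n - 1 - (i : ℕ), by omega⟩ := by
      apply Fin.ext
      simp [Fin.val_rev]
      omega
    rw [h1, dif_pos hin]
    have h2 : n - 1 - ((⟨n - 1 - (i : ℕ), by omega⟩ : Fin n) : ℕ) = (i : ℕ) := by
      simp; omega
    rw [h2]
  rw [hrank g, hrank g'] at h
  obtain ⟨k, hkn, hk⟩ := bval_succ_struct n _ _ h
  have hn : 0 < n := by omega
  set t := n - 1 - k with htdef
  have htn : t < n := by omega
  have key : ∀ i : Fin n, ((grayToBin n g i ≠ grayToBin n g' i) ↔ t ≤ (i : ℕ)) := by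
    intro i
    have hin := i.isLt
    have hj : n - 1 - (i : ℕ) < n := by omega
    have hidx : (⟨n - 1 - (n - 1 - (i : ℕ)), by omega⟩ : Fin n) = i := by
      apply Fin.ext; simp; omega
    have hki := hk _ hj
    simp only [dif_pos hj, hidx] at hki
    rw [hki]
    omega
  have key2 : ∀ i : Fin n, ((g i ≠ g' i) ↔ (i : ℕ) = t) := by
    intro i
    have hin := i.isLt
    rcases Nat.eq_zero_or_pos (i : ℕ) with hi0 | hip
    · rw [← gray_zero n g i hi0, ← gray_zero n g' i hi0, key i, hi0]
      omega
    · set ip : Fin n := ⟨(i : ℕ) - 1, by omega⟩ with hipdef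
      have hg1 : g i = xor (grayToBin n g i) (grayToBin n g ip) := by
        rw [gray_step n g i hip, ← hipdef]
        cases grayToBin n g ip <;> simp
      have hg2 : g' i = xor (grayToBin n g' i) (grayToBin n g' ip) := by
        rw [gray_step n g' i hip, ← hipdef]
        cases grayToBin n g' ip <;> simp
      have A := key i
      have B := key ip
      have hipv : (ip : ℕ) = (i : ℕ) - 1 := rfl
      rw [hg1, hg2]
      clear hrank h hk hg1 hg2
      clear_value ip t
      clear hipdef
      rcases h1 : grayToBin n g i <;> rcases h2 : grayToBin n g' i <;>
        rcases h3 : grayToBin n g ip <;> rcases h4 : grayToBin n g' ip <;>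
        simp_all <;> omega
  rw [Finset.card_eq_one]
  refine ⟨⟨t, htn⟩, ?_⟩
  ext i
  simp only [Finset.mem_filter, Finset.mem_univ, true_and, Finset.mem_singleton,
    Fin.ext_iff, key2 i]
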